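/- Existence of surrogate distributions with invariant full conditionals: let P^1,...,P^D, P^T be distributions of (X_{S*}, X_N, Y) with densities p^k, such that the conditional density p^k(y | x_{S*}) is the same for all k (invariance assumption A1 with the test task). Then there exist distributions Q^1,...,Q^D,Q^T with densities q^k and a single function q such that for all k: (i) q^k(x_{S*}, y) = p^k(x_{S*}, y) (the marginal over (X_{S*}, Y) is preserved), and (ii) q^k(y | x_{S*}, x_N) = q(y | x_{S*}, x_N) (the full conditional is task-independent). -/

import Mathlib

open MeasureTheory

/-- Existence of surrogate distributions with invariant full conditionals: given task densities
`p^1, …, p^{D+1}` (the last one being the test task) over `(x_S, x_N, y)` whose conditionals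
`p^k(y | x_S)` agree across tasks, there are probability densities `q^k` and a single function
`qc` such that the `(x_S, y)`-marginal of `q^k` equals that of `p^k` and the full conditional
`q^k(y | x_S, x_N)` equals `qc` for every task. -/
theorem stmt_3
    {a b D : ℕ}
    (p : Fin (D + 1) → (Fin a → ℝ) → (Fin b → ℝ) → ℝ → ℝ)
    (hmeas : ∀ k, Measurable
      (fun z : (Fin a → ℝ) × (Fin b → ℝ) × ℝ => p k z.1 z.2.1 z.2.2))
    (hpos : ∀ k xS xN y, 0 < p k xS xN y)
    (hintgr : ∀ k, Integrable
      (fun z : (Fin a → ℝ) × (Fin b → ℝ) × ℝ => p k z.1 z.2.1 z.2.2))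
    (hone : ∀ k, ∫ xS, ∫ xN, ∫ y, p k xS xN y = 1)
    -- (A1) with the test task: the conditional density of y given x_S is task-independent
    (hinv : ∀ k k' xS y,
        (∫ xN, p k xS xN y) / (∫ y', ∫ xN, p k xS xN y') =
        (∫ xN, p k' xS xN y) / (∫ y', ∫ xN, p k' xS xN y')) :
    ∃ (q : Fin (D + 1) → (Fin a → ℝ) → (Fin b → ℝ) → ℝ → ℝ)
      (qc : (Fin a → ℝ) → (Fin b → ℝ) → ℝ → ℝ),
      (∀ k xS xN y, 0 ≤ q k xS xN y) ∧
      (∀ k, ∫ xS, ∫ xN, ∫ y, q k xS xN y = 1) ∧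
      -- (i) the marginal over (x_S, y) is preserved
      (∀ k xS y, ∫ xN, q k xS xN y = ∫ xN, p k xS xN y) ∧
      -- (ii) the full conditional of y given (x_S, x_N) is task-independent
      (∀ k xS xN y, q k xS xN y / (∫ y', q k xS xN y') = qc xS xN y) := by
  classical
  -- a fixed probability density on the nuisance coordinates
  set f : (Fin b → ℝ) → ℝ := fun xN => ∏ i, ProbabilityTheory.gaussianPDFReal 0 1 (xN i) with hf
  have hfpos : ∀ xN, 0 < f xN := fun xN =>
    Finset.prod_pos fun i _ => ProbabilityTheory.gaussianPDFReal_pos 0 1 (xN i) one_ne_zero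
  have hfint : ∫ xN, f xN = 1 := by
    erw [hf, MeasureTheory.integral_fintype_prod_eq_prod (ι := Fin b)
      (fun _ x => ProbabilityTheory.gaussianPDFReal 0 1 x)]
    simp [ProbabilityTheory.integral_gaussianPDFReal_eq_one 0 one_ne_zero]
  -- the (x_S, y) marginal of p
  set m : Fin (D + 1) → (Fin a → ℝ) → ℝ → ℝ := fun k xS y => ∫ xN, p k xS xN y with hm
  have hmnn : ∀ k xS y, 0 ≤ m k xS y := fun k xS y =>
    integral_nonneg fun xN => (hpos k xS xN y).le
  refine ⟨fun k xS xN y => f xN * m k xS y,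
    fun xS xN y => m 0 xS y / ∫ y', m 0 xS y', ?_, ?_, ?_, ?_⟩
  · exact fun k xS xN y => mul_nonneg (hfpos xN).le (hmnn k xS y)
  · intro k
    have step1 : ∀ xS xN, (∫ y, f xN * m k xS y) = f xN * ∫ y, m k xS y :=
      fun xS xN => integral_const_mul _ _
    have step2 : ∀ xS, (∫ xN, f xN * ∫ y, m k xS y) = ∫ y, m k xS y := by
      intro xS
      rw [integral_mul_const, hfint, one_mul]
    have key : (∫ xS, ∫ y, m k xS y) = 1 := by
      rw [← hone k]
      apply integral_congr_ae
      have hint := (hintgr k).prod_right_ae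
      filter_upwards [hint] with xS hxS
      have := MeasureTheory.integral_integral_swap
        (f := fun y xN => p k xS xN y) (μ := (volume : Measure ℝ))
        (ν := (volume : Measure (Fin b → ℝ))) ?_
      · exact this
      · exact hxS.swap
    calc ∫ xS, ∫ xN, ∫ y, f xN * m k xS y
        = ∫ xS, ∫ xN, f xN * ∫ y, m k xS y := by
          congr 1; ext xS; congr 1; ext xN; exact step1 xS xN
      _ = ∫ xS, ∫ y, m k xS y := by congr 1; ext xS; exact step2 xS
      _ = 1 := key
  · intro k xS y
    rw [integral_mul_const, hfint, one_mul]
  · intro k xS xN y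
    rw [integral_const_mul, mul_div_mul_left _ _ (hfpos xN).ne']
    exact hinv k 0 xS y
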